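/- For every complex number z with positive real part, Re(coth(z)) ≥ Re(1/z). -/

import Mathlib

open Real in
lemma sinh_le_self_mul_cosh {x : ℝ} (hx : 0 ≤ x) : Real.sinh x ≤ x * Real.cosh x := by
  have hd : ∀ t : ℝ, HasDerivAt (fun t : ℝ => t * Real.cosh t - Real.sinh t)
      (t * Real.sinh t) t := by
    intro t
    have h1 := ((hasDerivAt_id t).mul (Real.hasDerivAt_cosh t)).sub (Real.hasDerivAt_sinh t)
    exact h1.congr_deriv (by simp)
  have hmono : MonotoneOn (fun t : ℝ => t * Real.cosh t - Real.sinh t) (Set.Ici 0) := by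
    apply monotoneOn_of_deriv_nonneg (convex_Ici 0)
    · exact fun t _ => (hd t).continuousAt.continuousWithinAt
    · exact fun t _ => (hd t).differentiableAt.differentiableWithinAt
    · intro t ht
      rw [interior_Ici] at ht
      rw [(hd t).deriv]
      exact mul_nonneg ht.le (Real.sinh_nonneg_iff.2 ht.le)
  have := hmono (Set.self_mem_Ici) (Set.mem_Ici.2 hx) hx
  simpa using this

theorem coth_re_ge (z : ℂ) (hz : 0 < z.re) :
    (Complex.cosh z / Complex.sinh z).re ≥ (1 / z).re := by
  set x := z.re with hx
  set y := z.im with hy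
  have hzeq : z = (x : ℂ) + (y : ℂ) * Complex.I := (Complex.re_add_im z).symm
  have hs : Complex.sinh z =
      (Real.sinh x * Real.cos y : ℝ) + (Real.cosh x * Real.sin y : ℝ) * Complex.I := by
    rw [hzeq, Complex.sinh_add, Complex.sinh_mul_I, Complex.cosh_mul_I]
    push_cast [← Complex.ofReal_sinh, ← Complex.ofReal_cosh, ← Complex.ofReal_sin,
      ← Complex.ofReal_cos]
    ring
  have hc : Complex.cosh z =
      (Real.cosh x * Real.cos y : ℝ) + (Real.sinh x * Real.sin y : ℝ) * Complex.I := by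
    rw [hzeq, Complex.cosh_add, Complex.sinh_mul_I, Complex.cosh_mul_I]
    push_cast [← Complex.ofReal_sinh, ← Complex.ofReal_cosh, ← Complex.ofReal_sin,
      ← Complex.ofReal_cos]
    ring
  have hsx : 0 < Real.sinh x := Real.sinh_pos_iff.2 hz
  have hcx : 1 ≤ Real.cosh x := Real.one_le_cosh x
  have hpy : Real.sin y ^ 2 + Real.cos y ^ 2 = 1 := Real.sin_sq_add_cos_sq y
  have hpx : Real.cosh x ^ 2 - Real.sinh x ^ 2 = 1 := Real.cosh_sq_sub_sinh_sq x
  -- normSq of sinh z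
  have hns : Complex.normSq (Complex.sinh z) = Real.sinh x ^ 2 + Real.sin y ^ 2 := by
    rw [hs]
    simp only [Complex.normSq_apply, Complex.add_re, Complex.add_im, Complex.ofReal_re,
      Complex.ofReal_im, Complex.mul_re, Complex.mul_im, Complex.I_re, Complex.I_im]
    nlinarith [hpy, hpx]
  have hnz : Complex.normSq z = x ^ 2 + y ^ 2 := by
    simp [Complex.normSq_apply]; ring
  have hDpos : 0 < Real.sinh x ^ 2 + Real.sin y ^ 2 := by positivity
  have hZpos : 0 < x ^ 2 + y ^ 2 := by positivity
  have hre1 : (1 / z).re = x / (x ^ 2 + y ^ 2) := by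
    rw [one_div, Complex.inv_re, hnz]
  have hre2 : (Complex.cosh z / Complex.sinh z).re =
      Real.sinh x * Real.cosh x / (Real.sinh x ^ 2 + Real.sin y ^ 2) := by
    rw [Complex.div_re, hns, hs, hc]
    simp only [Complex.add_re, Complex.add_im, Complex.ofReal_re, Complex.ofReal_im,
      Complex.mul_re, Complex.mul_im, Complex.I_re, Complex.I_im]
    rw [← add_div]
    congr 1
    linear_combination Real.sinh x * Real.cosh x * hpy
  rw [hre1, hre2, ge_iff_le, div_le_div_iff₀ hZpos hDpos]
  have key : Real.sinh x ≤ x * Real.cosh x := sinh_le_self_mul_cosh hz.le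
  have hsin : Real.sin y ^ 2 ≤ y ^ 2 := Real.sin_sq_le_sq
  have hxs : x < Real.sinh x := Real.self_lt_sinh_iff.2 hz
  have hxcx : x ≤ Real.sinh x * Real.cosh x := by nlinarith
  nlinarith [mul_le_mul_of_nonneg_left key (mul_nonneg hz.le hsx.le),
    mul_le_mul_of_nonneg_left hsin hz.le,
    mul_le_mul_of_nonneg_right hxcx (sq_nonneg y)]
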